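/- arXiv:0910.4701 — 2 statements merged into one kernel-verified Lean document; each statement's English description precedes it below -/
import Mathlib

section
/- Fix λ ∈ ℝ. There exists a constant C > 0 such that for all u ∈ Ṽ and v ∈ H̃ one has |B̃_λ(u,v)|_{H̃} ≤ C ||u||_{Ṽ} |v|_{H̃}, and for all v ∈ Ṽ and u ∈ H̃ one has |B̃_λ(u,v)|_{H̃} ≤ C ||v||_{Ṽ} |u|_{H̃}. -/
open ComplexConjugate

noncomputable section

/-- Extension of a sequence `(u_n)_{n ≥ 1}` to integer indices, with the boundary
convention `u_m = 0` for `m ≤ 0` (in particular `u_0 = u_{-1} = 0`). -/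
def ext (u : ℕ → ℂ) : ℤ → ℂ := fun m => if 1 ≤ m then u m.toNat else 0

/-- Wave numbers `k_n = k₀ 2^n`. -/
def kseq (k₀ : ℝ) (n : ℤ) : ℝ := k₀ * 2 ^ n

/-- The GOY bilinear operator. -/
def goyB (k₀ : ℝ) (u v : ℕ → ℂ) : ℕ → ℂ := fun n =>
  Complex.I * (kseq k₀ n) *
    ( (1/4 : ℂ) * conj (ext v ((n : ℤ) - 1)) * conj (ext u ((n : ℤ) + 1))
      - (1/2 : ℂ) * (conj (ext u ((n : ℤ) + 1)) * conj (ext v ((n : ℤ) + 2))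
          + conj (ext v ((n : ℤ) + 1)) * conj (ext u ((n : ℤ) + 2)))
      + (1/8 : ℂ) * conj (ext u ((n : ℤ) - 1)) * conj (ext v ((n : ℤ) - 2)) )

/-- Membership in `H`: square-summability over `n ≥ 1`. -/
def memH (u : ℕ → ℂ) : Prop := Summable (fun n : ℕ => ‖u (n + 1)‖ ^ 2)

/-- The `H`-norm `|u|_H = (∑_{n ≥ 1} |u_n|²)^{1/2}`. -/
def normH (u : ℕ → ℂ) : ℝ := Real.sqrt (∑' n : ℕ, ‖u (n + 1)‖ ^ 2)

/-- Membership in `V`: `u ∈ H` and `∑_{n ≥ 1} k_n² |u_n|² < ∞`. -/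
def memV (k₀ : ℝ) (u : ℕ → ℂ) : Prop :=
  memH u ∧ Summable (fun n : ℕ => (kseq k₀ (n + 1)) ^ 2 * ‖u (n + 1)‖ ^ 2)

/-- The `V`-norm `‖u‖_V = (∑_{n ≥ 1} k_n² |u_n|²)^{1/2}`. -/
def normV (k₀ : ℝ) (u : ℕ → ℂ) : ℝ :=
  Real.sqrt (∑' n : ℕ, (kseq k₀ (n + 1)) ^ 2 * ‖u (n + 1)‖ ^ 2)

/-- Membership in `H̃ = H × H`. -/
def memHt (x : (ℕ → ℂ) × (ℕ → ℂ)) : Prop := memH x.1 ∧ memH x.2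

/-- The `H̃`-norm: `|x|_{H̃}² = |x₁|_H² + |x₂|_H²`. -/
def normHt (x : (ℕ → ℂ) × (ℕ → ℂ)) : ℝ :=
  Real.sqrt ((∑' n : ℕ, ‖x.1 (n + 1)‖ ^ 2) + (∑' n : ℕ, ‖x.2 (n + 1)‖ ^ 2))

/-- Membership in `Ṽ = V × V`. -/
def memVt (k₀ : ℝ) (x : (ℕ → ℂ) × (ℕ → ℂ)) : Prop := memV k₀ x.1 ∧ memV k₀ x.2

/-- The `Ṽ`-norm: `‖x‖_{Ṽ}² = ‖x₁‖_V² + ‖x₂‖_V²`. -/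
def normVt (k₀ : ℝ) (x : (ℕ → ℂ) × (ℕ → ℂ)) : ℝ :=
  Real.sqrt ((∑' n : ℕ, (kseq k₀ (n + 1)) ^ 2 * ‖x.1 (n + 1)‖ ^ 2)
    + (∑' n : ℕ, (kseq k₀ (n + 1)) ^ 2 * ‖x.2 (n + 1)‖ ^ 2))

/-- The coupled bilinear operator
`B̃_λ(x,y) = (B(x₁,y₁) + λ B(x₂,y₁), B(x₁,y₂) + λ B(x₂,y₂))`. -/
def Btilde (k₀ lam : ℝ) (x y : (ℕ → ℂ) × (ℕ → ℂ)) : (ℕ → ℂ) × (ℕ → ℂ) :=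
  (fun n => goyB k₀ x.1 y.1 n + (lam : ℂ) * goyB k₀ x.2 y.1 n,
   fun n => goyB k₀ x.1 y.2 n + (lam : ℂ) * goyB k₀ x.2 y.2 n)

namespace GoyAux

/-- absolute value of extended sequence -/
def g (w : ℕ → ℂ) (m : ℤ) : ℝ := ‖ext w m‖

/-- the four-term local sum -/
def G (w : ℕ → ℂ) (n : ℕ) : ℝ :=
  g w ((n : ℤ) - 1) + g w (n : ℤ) + g w ((n : ℤ) + 2) + g w ((n : ℤ) + 3)

lemma g_nonneg (w : ℕ → ℂ) (m : ℤ) : 0 ≤ g w m := norm_nonneg _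

lemma G_nonneg (w : ℕ → ℂ) (n : ℕ) : 0 ≤ G w n := by
  have := g_nonneg w ((n : ℤ) - 1); have := g_nonneg w (n : ℤ)
  have := g_nonneg w ((n : ℤ) + 2); have := g_nonneg w ((n : ℤ) + 3)
  unfold G; linarith

lemma ext_ofNat (w : ℕ → ℂ) (n : ℕ) : ext w ((n : ℤ) + 1) = w (n + 1) := by
  have h : (1 : ℤ) ≤ (n : ℤ) + 1 := by omega
  have ht : ((n : ℤ) + 1).toNat = n + 1 := by omega
  simp only [ext, if_pos h, ht]

lemma ext_nonpos (w : ℕ → ℂ) (m : ℤ) (h : m ≤ 0) : ext w m = 0 := by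
  simp only [ext, if_neg (by omega : ¬ (1:ℤ) ≤ m)]

lemma summable_g_sq (w : ℕ → ℂ) (hw : memH w) :
    Summable (fun m : ℤ => g w m ^ 2) := by
  have hinj : Function.Injective (fun n : ℕ => (n : ℤ) + 1) := by
    intro a b h
    have h' : (a : ℤ) + 1 = (b : ℤ) + 1 := h
    omega
  have h0 : ∀ x ∉ Set.range (fun n : ℕ => (n : ℤ) + 1), g w x ^ 2 = 0 := by
    intro x hx
    have hx0 : x ≤ 0 := by
      by_contra h
      push_neg at h
      exact hx ⟨(x - 1).toNat, by show ((x - 1).toNat : ℤ) + 1 = x; omega⟩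
    rw [g, ext_nonpos w x hx0]
    simp
  have hcomp : ((fun m : ℤ => g w m ^ 2) ∘ fun n : ℕ => (n : ℤ) + 1)
      = fun n : ℕ => ‖w (n + 1)‖ ^ 2 := by
    funext n
    simp [Function.comp, g, ext_ofNat]
  exact (hinj.summable_iff h0).mp (hcomp ▸ hw)

lemma tsum_g_sq (w : ℕ → ℂ) : (∑' m : ℤ, g w m ^ 2) = ∑' n : ℕ, ‖w (n + 1)‖ ^ 2 := by
  have hinj : Function.Injective (fun n : ℕ => (n : ℤ) + 1) := by
    intro a b h
    have h' : (a : ℤ) + 1 = (b : ℤ) + 1 := h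
    omega
  have hsupp : Function.support (fun m : ℤ => g w m ^ 2) ⊆
      Set.range (fun n : ℕ => (n : ℤ) + 1) := by
    intro x hx
    by_contra h
    have hx0 : x ≤ 0 := by
      by_contra h'
      push_neg at h'
      exact h ⟨(x - 1).toNat, by show ((x - 1).toNat : ℤ) + 1 = x; omega⟩
    have hz : g w x ^ 2 = 0 := by rw [g, ext_nonpos w x hx0]; simp
    exact hx hz
  have := hinj.tsum_eq hsupp (f := fun m : ℤ => g w m ^ 2)
  rw [← this]
  apply tsum_congr
  intro n
  simp [g, ext_ofNat]

lemma shift (w : ℕ → ℂ) (hw : memH w) (e : ℕ → ℤ) (he : Function.Injective e) :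
    Summable (fun n : ℕ => g w (e n) ^ 2) ∧
      (∑' n : ℕ, g w (e n) ^ 2) ≤ ∑' n : ℕ, ‖w (n + 1)‖ ^ 2 := by
  have hZ := summable_g_sq w hw
  have hs : Summable (fun n : ℕ => g w (e n) ^ 2) := hZ.comp_injective he
  refine ⟨hs, ?_⟩
  calc (∑' n : ℕ, g w (e n) ^ 2) ≤ ∑' m : ℤ, g w m ^ 2 :=
        Summable.tsum_le_tsum_of_inj e he (fun c _ => sq_nonneg _) (fun i => le_rfl) hs hZ
    _ = _ := tsum_g_sq w

lemma normV_nonneg (k₀ : ℝ) (u : ℕ → ℂ) : 0 ≤ normV k₀ u := Real.sqrt_nonneg _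

lemma normH_nonneg (u : ℕ → ℂ) : 0 ≤ normH u := Real.sqrt_nonneg _

lemma kseq_pos {k₀ : ℝ} (hk₀ : 0 < k₀) (m : ℤ) : 0 < kseq k₀ m := by
  have : (0:ℝ) < (2:ℝ) ^ m := by positivity
  exact mul_pos hk₀ this

lemma V_bound {k₀ : ℝ} (hk₀ : 0 < k₀) {u : ℕ → ℂ} (hu : memV k₀ u) (n : ℕ) (m : ℤ)
    (hm : (n : ℤ) - 1 ≤ m) :
    kseq k₀ ((n : ℤ) + 1) * g u m ≤ 4 * normV k₀ u := by
  rcases le_or_gt m 0 with h | h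
  · rw [g, ext_nonpos u m h]
    simp only [norm_zero, mul_zero]
    have := normV_nonneg k₀ u; linarith
  · obtain ⟨j, rfl⟩ : ∃ j : ℕ, m = (j : ℤ) + 1 := ⟨(m - 1).toNat, by omega⟩
    have hterm : (kseq k₀ ((j : ℤ) + 1)) ^ 2 * ‖u (j + 1)‖ ^ 2 ≤
        ∑' i : ℕ, (kseq k₀ ((i : ℤ) + 1)) ^ 2 * ‖u (i + 1)‖ ^ 2 :=
      Summable.le_tsum hu.2 j (fun i _ => by positivity)
    have hk : 0 < kseq k₀ ((j : ℤ) + 1) := kseq_pos hk₀ _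
    have h1 : kseq k₀ ((j : ℤ) + 1) * g u ((j : ℤ) + 1) ≤ normV k₀ u := by
      have heq : kseq k₀ ((j : ℤ) + 1) * g u ((j : ℤ) + 1)
          = Real.sqrt ((kseq k₀ ((j : ℤ) + 1)) ^ 2 * ‖u (j + 1)‖ ^ 2) := by
        rw [g, ext_ofNat, Real.sqrt_mul (sq_nonneg _), Real.sqrt_sq hk.le,
          Real.sqrt_sq (norm_nonneg _)]
      rw [heq, normV]
      exact Real.sqrt_le_sqrt hterm
    have hmono : kseq k₀ ((n : ℤ) + 1) ≤ 4 * kseq k₀ ((j : ℤ) + 1) := by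
      unfold kseq
      have h2 : (2:ℝ) ^ ((n : ℤ) + 1) ≤ 4 * (2:ℝ) ^ ((j : ℤ) + 1) := by
        have h4 : (4:ℝ) * (2:ℝ) ^ ((j : ℤ) + 1) = (2:ℝ) ^ ((j : ℤ) + 3) := by
          have hz := zpow_add₀ (by norm_num : (2:ℝ) ≠ 0) ((j : ℤ) + 1) (2 : ℤ)
          rw [show ((j : ℤ) + 1) + 2 = (j : ℤ) + 3 by ring] at hz
          rw [hz]
          norm_num
          ring
        rw [h4]
        exact zpow_le_zpow_right₀ one_le_two (by omega)
      calc k₀ * (2:ℝ) ^ ((n : ℤ) + 1) ≤ k₀ * (4 * (2:ℝ) ^ ((j : ℤ) + 1)) := by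
            exact mul_le_mul_of_nonneg_left h2 hk₀.le
        _ = 4 * (k₀ * (2:ℝ) ^ ((j : ℤ) + 1)) := by ring
    have hg := g_nonneg u ((j : ℤ) + 1)
    calc kseq k₀ ((n : ℤ) + 1) * g u ((j : ℤ) + 1)
        ≤ (4 * kseq k₀ ((j : ℤ) + 1)) * g u ((j : ℤ) + 1) :=
          mul_le_mul_of_nonneg_right hmono hg
      _ = 4 * (kseq k₀ ((j : ℤ) + 1) * g u ((j : ℤ) + 1)) := by ring
      _ ≤ 4 * normV k₀ u := by linarith

end GoyAux

namespace GoyAux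

lemma goy_norm_bound (k₀ : ℝ) (hk₀ : 0 < k₀) (u v : ℕ → ℂ) (n : ℕ) :
    ‖goyB k₀ u v (n + 1)‖ ≤ kseq k₀ ((n : ℤ) + 1) *
      ((1/4) * (g v (n : ℤ) * g u ((n : ℤ) + 2))
        + (1/2) * (g u ((n : ℤ) + 2) * g v ((n : ℤ) + 3)
            + g v ((n : ℤ) + 2) * g u ((n : ℤ) + 3))
        + (1/8) * (g u (n : ℤ) * g v ((n : ℤ) - 1))) := by
  have e1 : ((n + 1 : ℕ) : ℤ) - 1 = (n : ℤ) := by push_cast; ring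
  have e2 : ((n + 1 : ℕ) : ℤ) + 1 = (n : ℤ) + 2 := by push_cast; ring
  have e3 : ((n + 1 : ℕ) : ℤ) + 2 = (n : ℤ) + 3 := by push_cast; ring
  have e4 : ((n + 1 : ℕ) : ℤ) - 2 = (n : ℤ) - 1 := by push_cast; ring
  have e5 : ((n + 1 : ℕ) : ℤ) = (n : ℤ) + 1 := by push_cast; ring
  unfold goyB
  rw [e1, e2, e3, e4, e5]
  rw [norm_mul, norm_mul, Complex.norm_I, one_mul, Complex.norm_real, Real.norm_eq_abs,
    abs_of_pos (kseq_pos hk₀ _)]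
  apply mul_le_mul_of_nonneg_left _ (kseq_pos hk₀ _).le
  calc ‖(1/4 : ℂ) * conj (ext v (n : ℤ)) * conj (ext u ((n : ℤ) + 2))
      - (1/2 : ℂ) * (conj (ext u ((n : ℤ) + 2)) * conj (ext v ((n : ℤ) + 3))
          + conj (ext v ((n : ℤ) + 2)) * conj (ext u ((n : ℤ) + 3)))
      + (1/8 : ℂ) * conj (ext u (n : ℤ)) * conj (ext v ((n : ℤ) - 1))‖
      ≤ ‖(1/4 : ℂ) * conj (ext v (n : ℤ)) * conj (ext u ((n : ℤ) + 2))‖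
        + ‖(1/2 : ℂ) * (conj (ext u ((n : ℤ) + 2)) * conj (ext v ((n : ℤ) + 3))
            + conj (ext v ((n : ℤ) + 2)) * conj (ext u ((n : ℤ) + 3)))‖
        + ‖(1/8 : ℂ) * conj (ext u (n : ℤ)) * conj (ext v ((n : ℤ) - 1))‖ := by
        refine (norm_add_le _ _).trans ?_
        have := norm_sub_le ((1/4 : ℂ) * conj (ext v (n : ℤ)) * conj (ext u ((n : ℤ) + 2)))
          ((1/2 : ℂ) * (conj (ext u ((n : ℤ) + 2)) * conj (ext v ((n : ℤ) + 3))
            + conj (ext v ((n : ℤ) + 2)) * conj (ext u ((n : ℤ) + 3))))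
        linarith
    _ ≤ (1/4) * (g v (n : ℤ) * g u ((n : ℤ) + 2))
        + (1/2) * (g u ((n : ℤ) + 2) * g v ((n : ℤ) + 3)
            + g v ((n : ℤ) + 2) * g u ((n : ℤ) + 3))
        + (1/8) * (g u (n : ℤ) * g v ((n : ℤ) - 1)) := by
        simp only [norm_mul, RCLike.norm_conj, g]
        have hnadd := norm_add_le (conj (ext u ((n : ℤ) + 2)) * conj (ext v ((n : ℤ) + 3)))
          (conj (ext v ((n : ℤ) + 2)) * conj (ext u ((n : ℤ) + 3)))
        simp only [norm_mul, RCLike.norm_conj] at hnadd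
        have h14 : ‖(1/4 : ℂ)‖ = 1/4 := by norm_num
        have h12 : ‖(1/2 : ℂ)‖ = 1/2 := by norm_num
        have h18 : ‖(1/8 : ℂ)‖ = 1/8 := by norm_num
        rw [h14, h12, h18]
        nlinarith [norm_nonneg (ext v (n : ℤ)), norm_nonneg (ext u ((n : ℤ) + 2)),
          norm_nonneg (ext v ((n : ℤ) + 3)), norm_nonneg (ext v ((n : ℤ) + 2)),
          norm_nonneg (ext u ((n : ℤ) + 3)), norm_nonneg (ext u (n : ℤ)),
          norm_nonneg (ext v ((n : ℤ) - 1))]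

lemma goy_pt1 {k₀ : ℝ} (hk₀ : 0 < k₀) {u : ℕ → ℂ} (hu : memV k₀ u) (v : ℕ → ℂ) (n : ℕ) :
    ‖goyB k₀ u v (n + 1)‖ ≤ 8 * normV k₀ u * G v n := by
  have hb := goy_norm_bound k₀ hk₀ u v n
  have h1 := V_bound hk₀ hu n ((n : ℤ) + 2) (by omega)
  have h2 := V_bound hk₀ hu n ((n : ℤ) + 3) (by omega)
  have h3 := V_bound hk₀ hu n (n : ℤ) (by omega)
  have hg1 := g_nonneg v (n : ℤ); have hg2 := g_nonneg v ((n : ℤ) + 3)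
  have hg3 := g_nonneg v ((n : ℤ) + 2); have hg4 := g_nonneg v ((n : ℤ) - 1)
  have hN := normV_nonneg k₀ u
  have t1 := mul_le_mul_of_nonneg_left h1 hg1
  have t2 := mul_le_mul_of_nonneg_left h1 hg2
  have t3 := mul_le_mul_of_nonneg_left h2 hg3
  have t4 := mul_le_mul_of_nonneg_left h3 hg4
  unfold G
  nlinarith [mul_nonneg hN hg1, mul_nonneg hN hg2, mul_nonneg hN hg3, mul_nonneg hN hg4]

lemma goy_pt2 {k₀ : ℝ} (hk₀ : 0 < k₀) (u : ℕ → ℂ) {v : ℕ → ℂ} (hv : memV k₀ v) (n : ℕ) :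
    ‖goyB k₀ u v (n + 1)‖ ≤ 8 * normV k₀ v * G u n := by
  have hb := goy_norm_bound k₀ hk₀ u v n
  have h1 := V_bound hk₀ hv n (n : ℤ) (by omega)
  have h2 := V_bound hk₀ hv n ((n : ℤ) + 3) (by omega)
  have h3 := V_bound hk₀ hv n ((n : ℤ) + 2) (by omega)
  have h4 := V_bound hk₀ hv n ((n : ℤ) - 1) (by omega)
  have hg1 := g_nonneg u ((n : ℤ) + 2); have hg2 := g_nonneg u ((n : ℤ) + 3)
  have hg3 := g_nonneg u (n : ℤ); have hg4 := g_nonneg u ((n : ℤ) - 1)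
  have hN := normV_nonneg k₀ v
  have t1 := mul_le_mul_of_nonneg_left h1 hg1
  have t2 := mul_le_mul_of_nonneg_left h2 hg1
  have t3 := mul_le_mul_of_nonneg_left h3 hg2
  have t4 := mul_le_mul_of_nonneg_left h4 hg3
  unfold G
  nlinarith [mul_nonneg hN hg1, mul_nonneg hN hg2, mul_nonneg hN hg3, mul_nonneg hN hg4]

end GoyAux

namespace GoyAux

lemma q_bound (w : ℕ → ℂ) (hw : memH w) :
    Summable (fun n : ℕ => g w ((n:ℤ) - 1) ^ 2 + g w (n:ℤ) ^ 2
      + g w ((n:ℤ) + 2) ^ 2 + g w ((n:ℤ) + 3) ^ 2) ∧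
    (∑' n : ℕ, (g w ((n:ℤ) - 1) ^ 2 + g w (n:ℤ) ^ 2
      + g w ((n:ℤ) + 2) ^ 2 + g w ((n:ℤ) + 3) ^ 2))
      ≤ 4 * ∑' n : ℕ, ‖w (n + 1)‖ ^ 2 := by
  have inj1 : Function.Injective (fun n : ℕ => (n:ℤ) - 1) := by
    intro a b h
    have h' : (a:ℤ) - 1 = (b:ℤ) - 1 := h
    omega
  have inj0 : Function.Injective (fun n : ℕ => (n:ℤ)) := by
    intro a b h
    have h' : (a:ℤ) = (b:ℤ) := h
    omega
  have inj2 : Function.Injective (fun n : ℕ => (n:ℤ) + 2) := by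
    intro a b h
    have h' : (a:ℤ) + 2 = (b:ℤ) + 2 := h
    omega
  have inj3 : Function.Injective (fun n : ℕ => (n:ℤ) + 3) := by
    intro a b h
    have h' : (a:ℤ) + 3 = (b:ℤ) + 3 := h
    omega
  have H1 := shift w hw _ inj1
  have H0 := shift w hw _ inj0
  have H2 := shift w hw _ inj2
  have H3 := shift w hw _ inj3
  have s1 : Summable (fun n : ℕ => g w ((n:ℤ) - 1) ^ 2) := H1.1
  have s0 : Summable (fun n : ℕ => g w (n:ℤ) ^ 2) := H0.1
  have s2 : Summable (fun n : ℕ => g w ((n:ℤ) + 2) ^ 2) := H2.1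
  have s3 : Summable (fun n : ℕ => g w ((n:ℤ) + 3) ^ 2) := H3.1
  have b1 : (∑' n : ℕ, g w ((n:ℤ) - 1) ^ 2) ≤ ∑' n : ℕ, ‖w (n + 1)‖ ^ 2 := H1.2
  have b0 : (∑' n : ℕ, g w (n:ℤ) ^ 2) ≤ ∑' n : ℕ, ‖w (n + 1)‖ ^ 2 := H0.2
  have b2 : (∑' n : ℕ, g w ((n:ℤ) + 2) ^ 2) ≤ ∑' n : ℕ, ‖w (n + 1)‖ ^ 2 := H2.2
  have b3 : (∑' n : ℕ, g w ((n:ℤ) + 3) ^ 2) ≤ ∑' n : ℕ, ‖w (n + 1)‖ ^ 2 := H3.2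
  refine ⟨((s1.add s0).add s2).add s3, ?_⟩
  rw [Summable.tsum_add ((s1.add s0).add s2) s3, Summable.tsum_add (s1.add s0) s2, Summable.tsum_add s1 s0]
  linarith

lemma core (w1 w2 : ℕ → ℂ) (h1 : memH w1) (h2 : memH w2) (K1 K2 : ℝ)
    (hK1 : 0 ≤ K1) (hK2 : 0 ≤ K2) (F : ℕ → ℂ)
    (hF : ∀ n : ℕ, ‖F (n + 1)‖ ≤ K1 * G w1 n + K2 * G w2 n) :
    memH F ∧ normH F ≤ 8 * (K1 * normH w1 + K2 * normH w2) := by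
  have hGsq : ∀ (w : ℕ → ℂ) (n : ℕ), G w n ^ 2 ≤
      4 * (g w ((n:ℤ) - 1) ^ 2 + g w (n:ℤ) ^ 2 + g w ((n:ℤ) + 2) ^ 2 + g w ((n:ℤ) + 3) ^ 2) := by
    intro w n
    have a := g_nonneg w ((n:ℤ) - 1); have b := g_nonneg w (n:ℤ)
    have c := g_nonneg w ((n:ℤ) + 2); have d := g_nonneg w ((n:ℤ) + 3)
    unfold G
    nlinarith [sq_nonneg (g w ((n:ℤ) - 1) - g w (n:ℤ)),
      sq_nonneg (g w ((n:ℤ) - 1) - g w ((n:ℤ) + 2)),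
      sq_nonneg (g w ((n:ℤ) - 1) - g w ((n:ℤ) + 3)),
      sq_nonneg (g w (n:ℤ) - g w ((n:ℤ) + 2)),
      sq_nonneg (g w (n:ℤ) - g w ((n:ℤ) + 3)),
      sq_nonneg (g w ((n:ℤ) + 2) - g w ((n:ℤ) + 3))]
  obtain ⟨Q1s, Q1b⟩ := q_bound w1 h1
  obtain ⟨Q2s, Q2b⟩ := q_bound w2 h2
  set q1 : ℕ → ℝ := fun n => g w1 ((n:ℤ) - 1) ^ 2 + g w1 (n:ℤ) ^ 2
    + g w1 ((n:ℤ) + 2) ^ 2 + g w1 ((n:ℤ) + 3) ^ 2 with hq1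
  set q2 : ℕ → ℝ := fun n => g w2 ((n:ℤ) - 1) ^ 2 + g w2 (n:ℤ) ^ 2
    + g w2 ((n:ℤ) + 2) ^ 2 + g w2 ((n:ℤ) + 3) ^ 2 with hq2
  have hFsq : ∀ n : ℕ, ‖F (n + 1)‖ ^ 2 ≤ 8 * K1 ^ 2 * q1 n + 8 * K2 ^ 2 * q2 n := by
    intro n
    have h := hF n
    have hX : 0 ≤ K1 * G w1 n + K2 * G w2 n :=
      add_nonneg (mul_nonneg hK1 (G_nonneg w1 n)) (mul_nonneg hK2 (G_nonneg w2 n))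
    have hsq : ‖F (n + 1)‖ ^ 2 ≤ (K1 * G w1 n + K2 * G w2 n) ^ 2 :=
      pow_le_pow_left₀ (norm_nonneg _) h 2
    have m1 : K1 ^ 2 * G w1 n ^ 2 ≤ K1 ^ 2 * (4 * q1 n) :=
      mul_le_mul_of_nonneg_left (hGsq w1 n) (sq_nonneg K1)
    have m2 : K2 ^ 2 * G w2 n ^ 2 ≤ K2 ^ 2 * (4 * q2 n) :=
      mul_le_mul_of_nonneg_left (hGsq w2 n) (sq_nonneg K2)
    nlinarith [sq_nonneg (K1 * G w1 n - K2 * G w2 n)]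
  have hMs : Summable (fun n : ℕ => 8 * K1 ^ 2 * q1 n + 8 * K2 ^ 2 * q2 n) :=
    (Q1s.mul_left _).add (Q2s.mul_left _)
  have hmem : memH F := Summable.of_nonneg_of_le (fun n => sq_nonneg _) hFsq hMs
  constructor
  · exact hmem
  · have hT : (∑' n : ℕ, ‖F (n + 1)‖ ^ 2) ≤
        32 * K1 ^ 2 * (∑' n : ℕ, ‖w1 (n + 1)‖ ^ 2)
          + 32 * K2 ^ 2 * (∑' n : ℕ, ‖w2 (n + 1)‖ ^ 2) := by
      have step1 : (∑' n : ℕ, ‖F (n + 1)‖ ^ 2) ≤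
          ∑' n : ℕ, (8 * K1 ^ 2 * q1 n + 8 * K2 ^ 2 * q2 n) :=
        Summable.tsum_le_tsum hFsq hmem hMs
      have step2 : (∑' n : ℕ, (8 * K1 ^ 2 * q1 n + 8 * K2 ^ 2 * q2 n))
          = 8 * K1 ^ 2 * (∑' n, q1 n) + 8 * K2 ^ 2 * (∑' n, q2 n) := by
        rw [Summable.tsum_add (Q1s.mul_left _) (Q2s.mul_left _), tsum_mul_left, tsum_mul_left]
      have m1 : 8 * K1 ^ 2 * (∑' n, q1 n) ≤ 8 * K1 ^ 2 * (4 * ∑' n : ℕ, ‖w1 (n + 1)‖ ^ 2) :=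
        mul_le_mul_of_nonneg_left Q1b (by positivity)
      have m2 : 8 * K2 ^ 2 * (∑' n, q2 n) ≤ 8 * K2 ^ 2 * (4 * ∑' n : ℕ, ‖w2 (n + 1)‖ ^ 2) :=
        mul_le_mul_of_nonneg_left Q2b (by positivity)
      calc (∑' n : ℕ, ‖F (n + 1)‖ ^ 2)
          ≤ ∑' n : ℕ, (8 * K1 ^ 2 * q1 n + 8 * K2 ^ 2 * q2 n) := step1
        _ = 8 * K1 ^ 2 * (∑' n, q1 n) + 8 * K2 ^ 2 * (∑' n, q2 n) := step2
        _ ≤ 32 * K1 ^ 2 * (∑' n : ℕ, ‖w1 (n + 1)‖ ^ 2)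
            + 32 * K2 ^ 2 * (∑' n : ℕ, ‖w2 (n + 1)‖ ^ 2) := by linarith
    have hS1 : normH w1 ^ 2 = ∑' n : ℕ, ‖w1 (n + 1)‖ ^ 2 :=
      Real.sq_sqrt (tsum_nonneg fun i => sq_nonneg _)
    have hS2 : normH w2 ^ 2 = ∑' n : ℕ, ‖w2 (n + 1)‖ ^ 2 :=
      Real.sq_sqrt (tsum_nonneg fun i => sq_nonneg _)
    have hRnn : 0 ≤ 8 * (K1 * normH w1 + K2 * normH w2) := by
      have := normH_nonneg w1; have := normH_nonneg w2
      positivity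
    have hT2 : (∑' n : ℕ, ‖F (n + 1)‖ ^ 2) ≤ (8 * (K1 * normH w1 + K2 * normH w2)) ^ 2 := by
      have hcross : 0 ≤ K1 * normH w1 * (K2 * normH w2) := by
        have := normH_nonneg w1; have := normH_nonneg w2
        positivity
      nlinarith [hT, hS1, hS2, sq_nonneg (K1 * normH w1), sq_nonneg (K2 * normH w2)]
    calc normH F = Real.sqrt (∑' n : ℕ, ‖F (n + 1)‖ ^ 2) := rfl
      _ ≤ Real.sqrt ((8 * (K1 * normH w1 + K2 * normH w2)) ^ 2) := Real.sqrt_le_sqrt hT2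
      _ = 8 * (K1 * normH w1 + K2 * normH w2) := Real.sqrt_sq hRnn

lemma normHt_le (F : (ℕ → ℂ) × (ℕ → ℂ)) (a1 a2 : ℝ)
    (ha1 : 0 ≤ a1) (ha2 : 0 ≤ a2) (h1 : normH F.1 ≤ a1) (h2 : normH F.2 ≤ a2) :
    normHt F ≤ Real.sqrt (a1 ^ 2 + a2 ^ 2) := by
  unfold normHt
  apply Real.sqrt_le_sqrt
  have e1 : (∑' n : ℕ, ‖F.1 (n + 1)‖ ^ 2) = normH F.1 ^ 2 :=
    (Real.sq_sqrt (tsum_nonneg fun i => sq_nonneg _)).symm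
  have e2 : (∑' n : ℕ, ‖F.2 (n + 1)‖ ^ 2) = normH F.2 ^ 2 :=
    (Real.sq_sqrt (tsum_nonneg fun i => sq_nonneg _)).symm
  have p1 : normH F.1 ^ 2 ≤ a1 ^ 2 := pow_le_pow_left₀ (normH_nonneg _) h1 2
  have p2 : normH F.2 ^ 2 ≤ a2 ^ 2 := pow_le_pow_left₀ (normH_nonneg _) h2 2
  rw [e1, e2]
  linarith

end GoyAux

namespace GoyAux

lemma sqrt_scale (A b1 b2 : ℝ) (hA : 0 ≤ A) :
    Real.sqrt ((A * b1) ^ 2 + (A * b2) ^ 2) = A * Real.sqrt (b1 ^ 2 + b2 ^ 2) := by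
  rw [show (A * b1) ^ 2 + (A * b2) ^ 2 = A ^ 2 * (b1 ^ 2 + b2 ^ 2) by ring,
    Real.sqrt_mul (sq_nonneg A), Real.sqrt_sq hA]

end GoyAux


/-- There is `C > 0` such that `|B̃_λ(u,v)|_{H̃} ≤ C ‖u‖_{Ṽ} |v|_{H̃}` for `u ∈ Ṽ, v ∈ H̃`,
and `|B̃_λ(u,v)|_{H̃} ≤ C ‖v‖_{Ṽ} |u|_{H̃}` for `v ∈ Ṽ, u ∈ H̃`. -/
theorem Btilde_estimates (k₀ lam : ℝ) (hk₀ : 0 < k₀) :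
    ∃ C : ℝ, 0 < C ∧
      (∀ u v : (ℕ → ℂ) × (ℕ → ℂ), memVt k₀ u → memHt v →
        memHt (Btilde k₀ lam u v) ∧
        normHt (Btilde k₀ lam u v) ≤ C * normVt k₀ u * normHt v) ∧
      (∀ u v : (ℕ → ℂ) × (ℕ → ℂ), memHt u → memVt k₀ v →
        memHt (Btilde k₀ lam u v) ∧
        normHt (Btilde k₀ lam u v) ≤ C * normVt k₀ v * normHt u) := by
  classical
  have habs : (0:ℝ) ≤ |lam| := abs_nonneg lam
  have htri : ∀ (a b : ℕ → ℂ) (n : ℕ),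
      ‖a (n+1) + (lam : ℂ) * b (n+1)‖ ≤ ‖a (n+1)‖ + |lam| * ‖b (n+1)‖ := by
    intro a b n
    have h := norm_add_le (a (n+1)) ((lam : ℂ) * b (n+1))
    rw [norm_mul, Complex.norm_real, Real.norm_eq_abs] at h
    exact h
  refine ⟨128 * (1 + |lam|), by positivity, ?_, ?_⟩
  · -- case u ∈ Ṽ, v ∈ H̃
    intro u v hu hv
    obtain ⟨hu1, hu2⟩ := hu
    obtain ⟨hv1, hv2⟩ := hv
    have hNu1 := GoyAux.normV_nonneg k₀ u.1
    have hNu2 := GoyAux.normV_nonneg k₀ u.2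
    have hK1 : (0:ℝ) ≤ 8 * normV k₀ u.1 := by linarith
    have hK2 : (0:ℝ) ≤ 8 * (|lam| * normV k₀ u.2) := by positivity
    have hF1 : ∀ n : ℕ, ‖(Btilde k₀ lam u v).1 (n + 1)‖ ≤
        (8 * normV k₀ u.1) * GoyAux.G v.1 n
          + (8 * (|lam| * normV k₀ u.2)) * GoyAux.G v.1 n := by
      intro n
      have hA := GoyAux.goy_pt1 hk₀ hu1 v.1 n
      have hB := GoyAux.goy_pt1 hk₀ hu2 v.1 n
      have ht := htri (goyB k₀ u.1 v.1) (goyB k₀ u.2 v.1) n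
      have hB' := mul_le_mul_of_nonneg_left hB habs
      have hG := GoyAux.G_nonneg v.1 n
      show ‖goyB k₀ u.1 v.1 (n+1) + (lam : ℂ) * goyB k₀ u.2 v.1 (n+1)‖ ≤ _
      nlinarith
    have hF2 : ∀ n : ℕ, ‖(Btilde k₀ lam u v).2 (n + 1)‖ ≤
        (8 * normV k₀ u.1) * GoyAux.G v.2 n
          + (8 * (|lam| * normV k₀ u.2)) * GoyAux.G v.2 n := by
      intro n
      have hA := GoyAux.goy_pt1 hk₀ hu1 v.2 n
      have hB := GoyAux.goy_pt1 hk₀ hu2 v.2 n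
      have ht := htri (goyB k₀ u.1 v.2) (goyB k₀ u.2 v.2) n
      have hB' := mul_le_mul_of_nonneg_left hB habs
      have hG := GoyAux.G_nonneg v.2 n
      show ‖goyB k₀ u.1 v.2 (n+1) + (lam : ℂ) * goyB k₀ u.2 v.2 (n+1)‖ ≤ _
      nlinarith
    obtain ⟨hm1, hn1⟩ := GoyAux.core v.1 v.1 hv1 hv1 _ _ hK1 hK2 _ hF1
    obtain ⟨hm2, hn2⟩ := GoyAux.core v.2 v.2 hv2 hv2 _ _ hK1 hK2 _ hF2
    refine ⟨⟨hm1, hm2⟩, ?_⟩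
    set A : ℝ := 64 * (normV k₀ u.1 + |lam| * normV k₀ u.2) with hA_def
    have hA0 : 0 ≤ A := by positivity
    have hb1 : normH (Btilde k₀ lam u v).1 ≤ A * normH v.1 := by
      have := GoyAux.normH_nonneg v.1
      nlinarith
    have hb2 : normH (Btilde k₀ lam u v).2 ≤ A * normH v.2 := by
      have := GoyAux.normH_nonneg v.2
      nlinarith
    have hstep := GoyAux.normHt_le (Btilde k₀ lam u v) (A * normH v.1) (A * normH v.2)
      (by have := GoyAux.normH_nonneg v.1; positivity)
      (by have := GoyAux.normH_nonneg v.2; positivity) hb1 hb2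
    have hsq : Real.sqrt ((A * normH v.1) ^ 2 + (A * normH v.2) ^ 2) = A * normHt v := by
      rw [GoyAux.sqrt_scale A _ _ hA0]
      congr 1
      unfold normH normHt
      rw [Real.sq_sqrt (tsum_nonneg fun i => sq_nonneg _),
        Real.sq_sqrt (tsum_nonneg fun i => sq_nonneg _)]
    rw [hsq] at hstep
    have hVle1 : normV k₀ u.1 ≤ normVt k₀ u := by
      unfold normV normVt
      exact Real.sqrt_le_sqrt (le_add_of_nonneg_right (tsum_nonneg fun i => by positivity))
    have hVle2 : normV k₀ u.2 ≤ normVt k₀ u := by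
      unfold normV normVt
      exact Real.sqrt_le_sqrt (le_add_of_nonneg_left (tsum_nonneg fun i => by positivity))
    have hAle : A ≤ 128 * (1 + |lam|) * normVt k₀ u := by
      have h1 : |lam| * normV k₀ u.2 ≤ |lam| * normVt k₀ u :=
        mul_le_mul_of_nonneg_left hVle2 habs
      have hVt := GoyAux.normV_nonneg -- dummy
      have hVt0 : 0 ≤ normVt k₀ u := Real.sqrt_nonneg _
      rw [hA_def]
      nlinarith
    have hHtv : 0 ≤ normHt v := Real.sqrt_nonneg _
    calc normHt (Btilde k₀ lam u v) ≤ A * normHt v := hstep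
      _ ≤ (128 * (1 + |lam|) * normVt k₀ u) * normHt v :=
          mul_le_mul_of_nonneg_right hAle hHtv
      _ = 128 * (1 + |lam|) * normVt k₀ u * normHt v := by ring
  · -- case u ∈ H̃, v ∈ Ṽ
    intro u v hu hv
    obtain ⟨hu1, hu2⟩ := hu
    obtain ⟨hv1, hv2⟩ := hv
    have hNv1 := GoyAux.normV_nonneg k₀ v.1
    have hNv2 := GoyAux.normV_nonneg k₀ v.2
    have hK11 : (0:ℝ) ≤ 8 * normV k₀ v.1 := by linarith
    have hK12 : (0:ℝ) ≤ 8 * (|lam| * normV k₀ v.1) := by positivity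
    have hK21 : (0:ℝ) ≤ 8 * normV k₀ v.2 := by linarith
    have hK22 : (0:ℝ) ≤ 8 * (|lam| * normV k₀ v.2) := by positivity
    have hF1 : ∀ n : ℕ, ‖(Btilde k₀ lam u v).1 (n + 1)‖ ≤
        (8 * normV k₀ v.1) * GoyAux.G u.1 n
          + (8 * (|lam| * normV k₀ v.1)) * GoyAux.G u.2 n := by
      intro n
      have hA := GoyAux.goy_pt2 hk₀ u.1 hv1 n
      have hB := GoyAux.goy_pt2 hk₀ u.2 hv1 n
      have ht := htri (goyB k₀ u.1 v.1) (goyB k₀ u.2 v.1) n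
      have hB' := mul_le_mul_of_nonneg_left hB habs
      show ‖goyB k₀ u.1 v.1 (n+1) + (lam : ℂ) * goyB k₀ u.2 v.1 (n+1)‖ ≤ _
      nlinarith
    have hF2 : ∀ n : ℕ, ‖(Btilde k₀ lam u v).2 (n + 1)‖ ≤
        (8 * normV k₀ v.2) * GoyAux.G u.1 n
          + (8 * (|lam| * normV k₀ v.2)) * GoyAux.G u.2 n := by
      intro n
      have hA := GoyAux.goy_pt2 hk₀ u.1 hv2 n
      have hB := GoyAux.goy_pt2 hk₀ u.2 hv2 n
      have ht := htri (goyB k₀ u.1 v.2) (goyB k₀ u.2 v.2) n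
      have hB' := mul_le_mul_of_nonneg_left hB habs
      show ‖goyB k₀ u.1 v.2 (n+1) + (lam : ℂ) * goyB k₀ u.2 v.2 (n+1)‖ ≤ _
      nlinarith
    obtain ⟨hm1, hn1⟩ := GoyAux.core u.1 u.2 hu1 hu2 _ _ hK11 hK12 _ hF1
    obtain ⟨hm2, hn2⟩ := GoyAux.core u.1 u.2 hu1 hu2 _ _ hK21 hK22 _ hF2
    refine ⟨⟨hm1, hm2⟩, ?_⟩
    set D : ℝ := 64 * (normH u.1 + |lam| * normH u.2) with hD_def
    have hHu1 := GoyAux.normH_nonneg u.1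
    have hHu2 := GoyAux.normH_nonneg u.2
    have hD0 : 0 ≤ D := by positivity
    have hb1 : normH (Btilde k₀ lam u v).1 ≤ D * normV k₀ v.1 := by nlinarith
    have hb2 : normH (Btilde k₀ lam u v).2 ≤ D * normV k₀ v.2 := by nlinarith
    have hstep := GoyAux.normHt_le (Btilde k₀ lam u v) (D * normV k₀ v.1) (D * normV k₀ v.2)
      (by positivity) (by positivity) hb1 hb2
    have hsq : Real.sqrt ((D * normV k₀ v.1) ^ 2 + (D * normV k₀ v.2) ^ 2)
        = D * normVt k₀ v := by
      rw [GoyAux.sqrt_scale D _ _ hD0]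
      congr 1
      unfold normV normVt
      rw [Real.sq_sqrt (tsum_nonneg fun i => by positivity),
        Real.sq_sqrt (tsum_nonneg fun i => by positivity)]
    rw [hsq] at hstep
    have hHle1 : normH u.1 ≤ normHt u := by
      unfold normH normHt
      exact Real.sqrt_le_sqrt (le_add_of_nonneg_right (tsum_nonneg fun i => sq_nonneg _))
    have hHle2 : normH u.2 ≤ normHt u := by
      unfold normH normHt
      exact Real.sqrt_le_sqrt (le_add_of_nonneg_left (tsum_nonneg fun i => sq_nonneg _))
    have hHt0 : 0 ≤ normHt u := Real.sqrt_nonneg _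
    have hDle : D ≤ 128 * (1 + |lam|) * normHt u := by
      have h1 : |lam| * normH u.2 ≤ |lam| * normHt u :=
        mul_le_mul_of_nonneg_left hHle2 habs
      rw [hD_def]
      nlinarith
    have hVt0 : 0 ≤ normVt k₀ v := Real.sqrt_nonneg _
    calc normHt (Btilde k₀ lam u v) ≤ D * normVt k₀ v := hstep
      _ ≤ (128 * (1 + |lam|) * normHt u) * normVt k₀ v :=
          mul_le_mul_of_nonneg_right hDle hVt0
      _ = 128 * (1 + |lam|) * normVt k₀ v * normHt u := by ring

end
end

section
/- Fix λ ∈ ℝ. One has ⟨B̃_λ(u,v), v⟩_{H̃} = 0 for all u ∈ Ṽ, v ∈ H̃ and for all v ∈ Ṽ, u ∈ H̃; moreover ⟨B̃_λ(u,v), w⟩_{H̃} = −⟨B̃_λ(u,w), v⟩_{H̃} for all u ∈ Ṽ and v, w ∈ H̃, and for all v, w ∈ Ṽ and u ∈ H̃. -/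
open ComplexConjugate

noncomputable section

/-- The real inner product of `H`: `⟨u,v⟩_H = Re ∑_{n ≥ 1} u_n conj(v_n)`. -/
def innerH (u v : ℕ → ℂ) : ℝ := ∑' n : ℕ, (u (n + 1) * conj (v (n + 1))).re

/-- The inner product of `H̃`: `⟨x,y⟩_{H̃} = ⟨x₁,y₁⟩_H + ⟨x₂,y₂⟩_H`. -/
def innerHt (x y : (ℕ → ℂ) × (ℕ → ℂ)) : ℝ := innerH x.1 y.1 + innerH x.2 y.2

/-!
Since `Re (i r conj w) = r Im w` for real `r`, the summand `Re (B(a,b)_m conj c_m)` is a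
combination, with coefficients `1/4, -1/2, -1/2, 1/8`, of triads `k_m Im (a_{m+p} b_{m+q} c_m)`,
which are symmetric in the three factors. As `k_{m+d} = 2^d k_m`, shifting the summation index
turns each triad sum of `⟨B(a,c), b⟩` into a multiple of one of `⟨B(a,b), c⟩`, and the
coefficients make all of them cancel. Every triad series converges absolutely when one of its
first two factors is in `V` and the others are in `H`: bound one `H`-factor by its `ℓ²`-norm and
pair the other two by `2 x y ≤ x² + y²`; moving the weight `k_m` onto the `V`-factor only costs a
power of `2`.
-/

lemma norm_le_sqrt_tsum_sq {ι E : Type*} [SeminormedAddCommGroup E] {x : ι → E}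
    (hx : Summable fun i => ‖x i‖ ^ 2) (i : ι) :
    ‖x i‖ ≤ √(∑' i, ‖x i‖ ^ 2) :=
  Real.le_sqrt_of_sq_le (hx.le_tsum i fun _ _ => by positivity)

lemma summable_mul_of_summable_sq {ι : Type*} {f g : ι → ℝ} (hf : Summable fun i => f i ^ 2)
    (hg : Summable fun i => g i ^ 2) : Summable fun i => f i * g i := by
  refine Summable.of_norm_bounded ((hf.add hg).div_const 2) fun i => ?_
  rw [Real.norm_eq_abs, abs_mul]
  nlinarith [two_mul_le_add_sq |f i| |g i|, sq_abs (f i), sq_abs (g i)]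

lemma ext_of_nonpos (u : ℕ → ℂ) {m : ℤ} (hm : m ≤ 0) : ext u m = 0 := by
  simp [ext, show ¬ 1 ≤ m by omega]

@[simp]
lemma ext_natCast_add_one (u : ℕ → ℂ) (n : ℕ) : ext u ((n : ℤ) + 1) = u (n + 1) := by
  simp [ext, show (1 : ℤ) ≤ n + 1 by omega]

lemma kseq_add (k₀ : ℝ) (m d : ℤ) : kseq k₀ (m + d) = 2 ^ d * kseq k₀ m := by
  rw [kseq, kseq, zpow_add₀ (by norm_num : (2 : ℝ) ≠ 0)]
  ring

lemma nonpos_of_notMem_range_natCast_add_one {m : ℤ}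
    (hm : m ∉ Set.range fun n : ℕ => (n : ℤ) + 1) : m ≤ 0 := by
  by_contra h
  exact hm ⟨(m - 1).toNat, show ((m - 1).toNat : ℤ) + 1 = m by omega⟩

lemma summable_natCast_add_one_iff {f : ℤ → ℝ} (hf : ∀ m ≤ 0, f m = 0) :
    Summable (fun n : ℕ => f (n + 1)) ↔ Summable f :=
  (add_left_injective 1 |>.comp Nat.cast_injective).summable_iff
    fun _ hm => hf _ (nonpos_of_notMem_range_natCast_add_one hm)

lemma tsum_natCast_add_one {f : ℤ → ℝ} (hf : ∀ m ≤ 0, f m = 0) :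
    ∑' n : ℕ, f (n + 1) = ∑' m, f m :=
  (add_left_injective 1 |>.comp Nat.cast_injective).tsum_eq
    fun m hm => by_contra fun h => hm (hf m (nonpos_of_notMem_range_natCast_add_one h))

lemma memH.summable_sq_ext {u : ℕ → ℂ} (hu : memH u) : Summable fun m => ‖ext u m‖ ^ 2 :=
  (summable_natCast_add_one_iff fun m hm => by simp [ext_of_nonpos u hm]).1
    (Summable.congr hu fun n => by simp)

lemma memV.summable_weighted_sq_ext {k₀ : ℝ} {u : ℕ → ℂ} (hu : memV k₀ u) :
    Summable fun m => kseq k₀ m ^ 2 * ‖ext u m‖ ^ 2 :=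
  (summable_natCast_add_one_iff fun m hm => by simp [ext_of_nonpos u hm]).1
    (hu.2.congr fun n => by simp)

lemma innerH_add_ofReal_mul (lam : ℝ) {f g w : ℕ → ℂ}
    (hf : Summable fun n : ℕ => (f (n + 1) * conj (w (n + 1))).re)
    (hg : Summable fun n : ℕ => (g (n + 1) * conj (w (n + 1))).re) :
    innerH (fun n => f n + lam * g n) w = innerH f w + lam * innerH g w := by
  rw [innerH, innerH, innerH, ← tsum_mul_left, ← hf.tsum_add (hg.mul_left lam)]
  congr! 2 with n
  simp [add_mul, mul_assoc]

namespace GOY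

def triad (k₀ : ℝ) (x y z : ℤ → ℂ) (p q m : ℤ) : ℝ :=
  kseq k₀ m * (x (m + p) * y (m + q) * z m).im

section Triad

variable (k₀ : ℝ) (x y z : ℤ → ℂ)

lemma triad_comm (p q : ℤ) : triad k₀ x y z p q = triad k₀ y x z q p := by
  ext m
  simp only [triad, mul_comm (x _)]

lemma triad_swap_sub (p q m : ℤ) :
    triad k₀ x z y p q (m - q) = 2 ^ (-q) * triad k₀ x y z (p - q) (-q) m := by
  rw [triad, triad, sub_add_cancel, show m - q + p = m + (p - q) by ring, sub_eq_add_neg,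
    kseq_add, mul_right_comm (x _)]
  ring

lemma tsum_triad_swap (p q : ℤ) :
    ∑' m, triad k₀ x z y p q m = 2 ^ (-q) * ∑' m, triad k₀ x y z (p - q) (-q) m := by
  rw [← tsum_mul_left, ← (Equiv.subRight q).tsum_eq]
  exact tsum_congr (triad_swap_sub k₀ x y z p q)

lemma summable_triad {C : ℝ} (hx : Summable fun m => kseq k₀ m ^ 2 * ‖x m‖ ^ 2)
    (hy : ∀ m, ‖y m‖ ≤ C) (hz : Summable fun m => ‖z m‖ ^ 2) (p q : ℤ) :
    Summable (triad k₀ x y z p q) := by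
  set f : ℤ → ℝ := fun m => |kseq k₀ m| * ‖x m‖
  have hf : Summable fun m => f m ^ 2 := hx.congr fun m => by simp only [f, mul_pow, sq_abs]
  replace hf : Summable fun m => f (m + p) ^ 2 := hf.comp_injective (add_left_injective p)
  refine .of_norm_bounded ((summable_mul_of_summable_sq hf hz).mul_left (2 ^ (-p) * C))
    fun m => ?_
  have hk : |kseq k₀ m| = 2 ^ (-p) * |kseq k₀ (m + p)| := by
    rw [← abs_of_pos (by positivity : (0 : ℝ) < 2 ^ (-p)), ← abs_mul, ← kseq_add,
      add_neg_cancel_right]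
  calc ‖triad k₀ x y z p q m‖
      ≤ |kseq k₀ m| * (‖x (m + p)‖ * ‖y (m + q)‖ * ‖z m‖) := by
        rw [Real.norm_eq_abs, triad, abs_mul, ← norm_mul, ← norm_mul]
        gcongr
        exact Complex.abs_im_le_norm _
    _ ≤ |kseq k₀ m| * (‖x (m + p)‖ * C * ‖z m‖) := by gcongr; exact hy _
    _ = 2 ^ (-p) * C * (f (m + p) * ‖z m‖) := by rw [hk]; ring

end Triad

def density (k₀ : ℝ) (x y z : ℤ → ℂ) (m : ℤ) : ℝ :=
  triad k₀ x y z 1 (-1) m / 4 - triad k₀ x y z 1 2 m / 2 - triad k₀ x y z 2 1 m / 2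
    + triad k₀ x y z (-1) (-2) m / 8

section Density

variable {k₀ : ℝ} {x y z : ℤ → ℂ} (h : ∀ p q, Summable (triad k₀ x y z p q))
include h

lemma hasSum_density :
    HasSum (density k₀ x y z)
      ((∑' m, triad k₀ x y z 1 (-1) m) / 4 - (∑' m, triad k₀ x y z 1 2 m) / 2
        - (∑' m, triad k₀ x y z 2 1 m) / 2 + (∑' m, triad k₀ x y z (-1) (-2) m) / 8) :=
  ((((h 1 (-1)).hasSum.div_const 4).sub ((h 1 2).hasSum.div_const 2)).sub
    ((h 2 1).hasSum.div_const 2)).add ((h (-1) (-2)).hasSum.div_const 8)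

lemma tsum_density_add_swap (h' : ∀ p q, Summable (triad k₀ x z y p q)) :
    ∑' m, density k₀ x y z m + ∑' m, density k₀ x z y m = 0 := by
  rw [(hasSum_density h).tsum_eq, (hasSum_density h').tsum_eq]
  have swap₁ := tsum_triad_swap k₀ x y z 1 (-1)
  have swap₂ := tsum_triad_swap k₀ x y z (-1) (-2)
  have swap₃ := tsum_triad_swap k₀ x z y 1 (-1)
  have swap₄ := tsum_triad_swap k₀ x z y (-1) (-2)
  norm_num at swap₁ swap₂ swap₃ swap₄
  linarith

end Density

lemma density_of_nonpos (k₀ : ℝ) (x y : ℤ → ℂ) (c : ℕ → ℂ) {m : ℤ} (hm : m ≤ 0) :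
    density k₀ x y (ext c) m = 0 := by
  simp [density, triad, ext_of_nonpos c hm]

lemma goyB_mul_conj_re (k₀ : ℝ) (a b c : ℕ → ℂ) (n : ℕ) :
    (goyB k₀ a b (n + 1) * conj (c (n + 1))).re =
      density k₀ (ext a) (ext b) (ext c) (n + 1) := by
  rw [← ext_natCast_add_one c n]
  simp [goyB, density, triad, Complex.mul_re, Complex.mul_im, ← sub_eq_add_neg]
  ring

lemma innerH_goyB (k₀ : ℝ) (a b c : ℕ → ℂ) :
    innerH (goyB k₀ a b) c = ∑' m, density k₀ (ext a) (ext b) (ext c) m := by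
  rw [innerH, tsum_congr (goyB_mul_conj_re k₀ a b c),
    tsum_natCast_add_one fun m => density_of_nonpos k₀ _ _ c]

def Admissible (k₀ : ℝ) (a b c : ℕ → ℂ) : Prop :=
  (memV k₀ a ∧ memH b ∧ memH c) ∨ (memH a ∧ memV k₀ b ∧ memV k₀ c)

namespace Admissible

variable {k₀ : ℝ} {a b c : ℕ → ℂ} (h : Admissible k₀ a b c)
include h

lemma swap : Admissible k₀ a c b := by
  unfold Admissible at *
  tauto

lemma summable_triad (p q : ℤ) : Summable (triad k₀ (ext a) (ext b) (ext c) p q) := by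
  rcases h with ⟨ha, hb, hc⟩ | ⟨ha, hb, hc⟩
  · exact GOY.summable_triad k₀ _ _ _ ha.summable_weighted_sq_ext
      (norm_le_sqrt_tsum_sq hb.summable_sq_ext) hc.summable_sq_ext p q
  · rw [triad_comm]
    exact GOY.summable_triad k₀ _ _ _ hb.summable_weighted_sq_ext
      (norm_le_sqrt_tsum_sq ha.summable_sq_ext) hc.1.summable_sq_ext q p

lemma summable_goyB_mul_conj_re :
    Summable fun n : ℕ => (goyB k₀ a b (n + 1) * conj (c (n + 1))).re := by
  simp_rw [goyB_mul_conj_re]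
  exact (summable_natCast_add_one_iff fun m => density_of_nonpos k₀ _ _ c).2
    (hasSum_density h.summable_triad).summable

lemma innerH_goyB_add_swap : innerH (goyB k₀ a b) c + innerH (goyB k₀ a c) b = 0 := by
  rw [innerH_goyB, innerH_goyB]
  exact tsum_density_add_swap h.summable_triad h.swap.summable_triad

end Admissible

end GOY

open GOY in
lemma innerHt_Btilde {k₀ : ℝ} (lam : ℝ) {u y z : (ℕ → ℂ) × (ℕ → ℂ)}
    (h₁₁ : Admissible k₀ u.1 y.1 z.1) (h₂₁ : Admissible k₀ u.2 y.1 z.1)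
    (h₁₂ : Admissible k₀ u.1 y.2 z.2) (h₂₂ : Admissible k₀ u.2 y.2 z.2) :
    innerHt (Btilde k₀ lam u y) z =
      innerH (goyB k₀ u.1 y.1) z.1 + lam * innerH (goyB k₀ u.2 y.1) z.1
        + (innerH (goyB k₀ u.1 y.2) z.2 + lam * innerH (goyB k₀ u.2 y.2) z.2) :=
  congrArg₂ (· + ·)
    (innerH_add_ofReal_mul lam h₁₁.summable_goyB_mul_conj_re h₂₁.summable_goyB_mul_conj_re)
    (innerH_add_ofReal_mul lam h₁₂.summable_goyB_mul_conj_re h₂₂.summable_goyB_mul_conj_re)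

open GOY in
lemma innerHt_Btilde_add_swap {k₀ : ℝ} (lam : ℝ) {u v w : (ℕ → ℂ) × (ℕ → ℂ)}
    (h : (memVt k₀ u ∧ memHt v ∧ memHt w) ∨ (memVt k₀ v ∧ memVt k₀ w ∧ memHt u)) :
    innerHt (Btilde k₀ lam u v) w + innerHt (Btilde k₀ lam u w) v = 0 := by
  obtain ⟨h₁₁, h₂₁, h₁₂, h₂₂⟩ : Admissible k₀ u.1 v.1 w.1 ∧ Admissible k₀ u.2 v.1 w.1 ∧
      Admissible k₀ u.1 v.2 w.2 ∧ Admissible k₀ u.2 v.2 w.2 := by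
    unfold memVt memHt Admissible at *
    tauto
  rw [innerHt_Btilde lam h₁₁ h₂₁ h₁₂ h₂₂, innerHt_Btilde lam h₁₁.swap h₂₁.swap h₁₂.swap h₂₂.swap]
  linear_combination h₁₁.innerH_goyB_add_swap + lam * h₂₁.innerH_goyB_add_swap
    + h₁₂.innerH_goyB_add_swap + lam * h₂₂.innerH_goyB_add_swap

theorem Btilde_energy_and_skew_symmetry_general (k₀ lam : ℝ) :
    (∀ u v : (ℕ → ℂ) × (ℕ → ℂ),
      (memVt k₀ u ∧ memHt v) ∨ (memVt k₀ v ∧ memHt u) →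
      innerHt (Btilde k₀ lam u v) v = 0) ∧
    (∀ u v w : (ℕ → ℂ) × (ℕ → ℂ),
      (memVt k₀ u ∧ memHt v ∧ memHt w) ∨ (memVt k₀ v ∧ memVt k₀ w ∧ memHt u) →
      innerHt (Btilde k₀ lam u v) w = - innerHt (Btilde k₀ lam u w) v) := by
  have skew : ∀ u v w : (ℕ → ℂ) × (ℕ → ℂ),
      (memVt k₀ u ∧ memHt v ∧ memHt w) ∨ (memVt k₀ v ∧ memVt k₀ w ∧ memHt u) →
      innerHt (Btilde k₀ lam u v) w = - innerHt (Btilde k₀ lam u w) v :=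
    fun u v w h => eq_neg_of_add_eq_zero_left (innerHt_Btilde_add_swap lam h)
  refine ⟨fun u v h => ?_, skew⟩
  have := skew u v v (by tauto)
  linarith

/-- `⟨B̃_λ(u,v), v⟩_{H̃} = 0` for `u ∈ Ṽ, v ∈ H̃` and for `v ∈ Ṽ, u ∈ H̃`; moreover
`⟨B̃_λ(u,v), w⟩_{H̃} = −⟨B̃_λ(u,w), v⟩_{H̃}` for `u ∈ Ṽ`, `v, w ∈ H̃`, and for
`v, w ∈ Ṽ`, `u ∈ H̃`. -/
theorem Btilde_energy_and_skew_symmetry (k₀ lam : ℝ) (hk₀ : 0 < k₀) :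
    (∀ u v : (ℕ → ℂ) × (ℕ → ℂ),
      (memVt k₀ u ∧ memHt v) ∨ (memVt k₀ v ∧ memHt u) →
      innerHt (Btilde k₀ lam u v) v = 0) ∧
    (∀ u v w : (ℕ → ℂ) × (ℕ → ℂ),
      (memVt k₀ u ∧ memHt v ∧ memHt w) ∨ (memVt k₀ v ∧ memVt k₀ w ∧ memHt u) →
      innerHt (Btilde k₀ lam u v) w = - innerHt (Btilde k₀ lam u w) v) :=
  Btilde_energy_and_skew_symmetry_general k₀ lam

end
end
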